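/- Let (W,S) be a Coxeter system with a realization V over a commutative domain 𝕜 ⊆ ℝ, and suppose W preserves the almost-orthant for k = ℤ spanned by (X,H). Then any simple reflection s ∈ S either acts trivially on V, or there exist x ≠ y in X and ħ in the ℤ-span of H such that s(x) = y + ħ, s(y) = x − ħ, and s(z) = z for every z ∈ X \ {x,y}; that is, s permutes X by a single transposition modulo the span of H. -/

import Mathlib

open Function

noncomputable section

/-- The subring `ℤ ⊆ ℝ` of integers, used to specialize the base subring `k` to `ℤ`. -/
def intSubring : Subring ℝ := (Int.castRingHom ℝ).range

/-- A *realization* of a Coxeter system `cs : CoxeterSystem M W` over a commutative domain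
`𝕜 ⊆ ℝ` (encoded as a subring of `ℝ`): a `𝕜`-module `V` together with simple roots
`root b ∈ V` and simple coroots `coroot b ∈ V*`, and a linear action `ρ` of `W` on `V`
for which each simple reflection acts by the reflection formula
`s(v) = v - ⟨coroot s, v⟩ • root s`. -/
structure Realization (𝕜 : Subring ℝ) {B W : Type*} [Group W]
    (M : CoxeterMatrix B) (cs : CoxeterSystem M W)
    (V : Type*) [AddCommGroup V] [Module 𝕜 V] where
  root : B → V
  coroot : B → (V →ₗ[𝕜] 𝕜)
  ρ : W →* (V ≃ₗ[𝕜] V)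
  coroot_root_self : ∀ b, coroot b (root b) = 2
  coroot_root_eq_zero_iff : ∀ b b', b ≠ b' → (coroot b (root b') = 0 ↔ M.M b b' = 2)
  simple_act : ∀ (b : B) (v : V), ρ (cs.simple b) v = v - coroot b v • root b

variable {𝕜 : Subring ℝ}

/-- `c ∈ k₊ := k ∩ ℝ_{≥0}`, for an element `c` of the base domain `𝕜 ⊆ ℝ`. -/
def InKPlus (k : Subring ℝ) (c : 𝕜) : Prop := (c : ℝ) ∈ k ∧ 0 ≤ (c : ℝ)

/-- The almost-orthant spanned by `(X, H)`, where `X` is the `Sum.inl` part of the `𝕜`-basis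
`e` and `H` is the `Sum.inr` part: all elements of `V` whose `X`-coordinates lie in
`k₊ = k ∩ ℝ_{≥0}` and whose `H`-coordinates lie in `k`.  (When the `Sum.inr` index type is
empty, this is the orthant spanned by the basis.) -/
def almostOrthant {V ι η : Type*} [AddCommGroup V] [Module 𝕜 V] (k : Subring ℝ)
    (e : Module.Basis (ι ⊕ η) 𝕜 V) : Set V :=
  {v | (∀ p, (e.repr v p : ℝ) ∈ k) ∧ ∀ i : ι, 0 ≤ (e.repr v (Sum.inl i) : ℝ)}

/-- The data witnessing that the Coxeter group `W`, acting via the realization `r`, preserves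
a `k`-lattice (the `k`-span of the `𝕜`-basis `e` of `V`, whose `k`-basis is
`X ∪ H = {e (Sum.inl i)} ∪ {e (Sum.inr j)}`) together with the almost-orthant spanned by
`(X, H)` inside it; each element of `H` is required to be `W`-invariant. -/
structure OrthantSetup (𝕜 k : Subring ℝ) {B W : Type*} [Group W]
    {M : CoxeterMatrix B} {cs : CoxeterSystem M W}
    {V : Type*} [AddCommGroup V] [Module 𝕜 V]
    (r : Realization 𝕜 M cs V) (ι η : Type*) where
  hk : k ≤ 𝕜
  e : Module.Basis (ι ⊕ η) 𝕜 V
  invariant : ∀ (j : η) (w : W), r.ρ w (e (Sum.inr j)) = e (Sum.inr j)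
  lattice_stable : ∀ (w : W) (v : V), (∀ p, ((e.repr v p : ℝ)) ∈ k) →
    ∀ p, ((e.repr (r.ρ w v) p : ℝ)) ∈ k
  orthant_stable : ∀ (w : W), ∀ v ∈ almostOrthant k e, r.ρ w v ∈ almostOrthant k e

namespace OrthantSetup

variable {𝕜 k : Subring ℝ} {B W : Type*} [Group W] {M : CoxeterMatrix B}
  {cs : CoxeterSystem M W} {V : Type*} [AddCommGroup V] [Module 𝕜 V]
  {r : Realization 𝕜 M cs V} {ι η : Type*}

/-- The element `xᵢ` of `X`. -/
def X (d : OrthantSetup 𝕜 k r ι η) (i : ι) : V := d.e (Sum.inl i)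

/-- The element `ħⱼ` of `H`. -/
def hbar (d : OrthantSetup 𝕜 k r ι η) (j : η) : V := d.e (Sum.inr j)

/-- `v` lies in the `k`-span of `H`. -/
def InHSpan (d : OrthantSetup 𝕜 k r ι η) (v : V) : Prop :=
  (∀ i : ι, d.e.repr v (Sum.inl i) = 0) ∧ ∀ j : η, ((d.e.repr v (Sum.inr j) : ℝ)) ∈ k

/-- The set `Xₛ ⊆ X` (identified with a set of indices) of elements of `X` moved by the
simple reflection with index `b`. -/
def moved (d : OrthantSetup 𝕜 k r ι η) (b : B) : Set ι :=
  {i | r.ρ (cs.simple b) (d.X i) ≠ d.X i}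

/-- `g` acts on `V` as a *rescaled shifted transposition* transposing `xᵢ` and `xⱼ`:
`g xᵢ = c • xⱼ + h` and `g xⱼ = c⁻¹ • (xᵢ - h)` for some `c ∈ k₊` invertible with inverse
in `k₊` and some `h` in the `k`-span of `H`, while `g` fixes all other elements of `X`. -/
def IsRST (d : OrthantSetup 𝕜 k r ι η) (g : V ≃ₗ[𝕜] V) (i j : ι) : Prop :=
  i ≠ j ∧ ∃ (c c' : 𝕜) (h : V), InKPlus k c ∧ InKPlus k c' ∧ c * c' = 1 ∧
    d.InHSpan h ∧ g (d.X i) = c • d.X j + h ∧ g (d.X j) = c' • (d.X i - h) ∧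
    ∀ z : ι, z ≠ i → z ≠ j → g (d.X z) = d.X z

/-- The transposition graph: vertices are (the indices of) the elements of `X`, and two
distinct vertices are adjacent when some simple reflection moves both of the corresponding
elements of `X` (i.e. they form the set `Xₛ` for some `s ∈ S`). -/
def transGraph (d : OrthantSetup 𝕜 k r ι η) : SimpleGraph ι where
  Adj i j := i ≠ j ∧ ∃ b : B, i ∈ d.moved b ∧ j ∈ d.moved b
  symm := by
    constructor
    intro i j h
    exact ⟨h.1.symm, h.2.choose, h.2.choose_spec.2, h.2.choose_spec.1⟩
  loopless := by
    constructor
    intro i h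
    exact h.1 rfl

end OrthantSetup

lemma intSubring_exists {x : ℝ} (hx : x ∈ intSubring) : ∃ n : ℤ, (n : ℝ) = x := by
  obtain ⟨n, hn⟩ := hx
  exact ⟨n, hn⟩

lemma exists_transposition_indices {ι η : Type*} (F : Finset (ι ⊕ η)) (C Q : ι ⊕ η → ℝ)
    (hinr : ∀ j : η, C (Sum.inr j) = 0)
    (hdiag_le : ∀ z : ι, C (Sum.inl z) * Q (Sum.inl z) ≤ 1)
    (hdiag_int : ∀ z : ι, C (Sum.inl z) * Q (Sum.inl z) ∈ intSubring)
    (hoff_le : ∀ z w : ι, z ≠ w → C (Sum.inl z) * Q (Sum.inl w) ≤ 0)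
    (hoff_int : ∀ z w : ι, z ≠ w → C (Sum.inl z) * Q (Sum.inl w) ∈ intSubring)
    (hsum : ∑ p ∈ F, C p * Q p = 2) :
    ∃ i j : ι, i ≠ j ∧ C (Sum.inl i) * Q (Sum.inl i) = 1 ∧ C (Sum.inl j) * Q (Sum.inl j) = 1 ∧
      C (Sum.inl i) * Q (Sum.inl j) = -1 ∧ C (Sum.inl j) * Q (Sum.inl i) = -1 := by
  classical
  set t : ι ⊕ η → ℝ := fun p => C p * Q p with ht
  have htinr : ∀ j : η, t (Sum.inr j) = 0 := fun j => by simp [ht, hinr j]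
  have hsign : ∀ z w : ι, z ≠ w → 0 ≤ t (Sum.inl z) * t (Sum.inl w) := by
    intro z w hzw
    have h1 := hoff_le z w hzw
    have h2 := hoff_le w z (Ne.symm hzw)
    have he : t (Sum.inl z) * t (Sum.inl w)
        = (C (Sum.inl z) * Q (Sum.inl w)) * (C (Sum.inl w) * Q (Sum.inl z)) := by
      simp only [ht]; ring
    rw [he]
    nlinarith
  have hnonneg : ∀ p, 0 ≤ t p := by
    intro p
    cases p with
    | inr j => simp [htinr]
    | inl z =>
      by_contra hlt
      push_neg at hlt
      have hex : ∃ q ∈ F, 0 < t q := by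
        by_contra h
        push_neg at h
        have h0 : (∑ p ∈ F, t p) ≤ 0 := Finset.sum_nonpos h
        rw [hsum] at h0
        linarith
      obtain ⟨q, hqF, hq⟩ := hex
      cases q with
      | inr j => rw [htinr] at hq; exact lt_irrefl _ hq
      | inl w =>
        have hzw : z ≠ w := by rintro rfl; linarith
        have := hsign z w hzw
        nlinarith
  have ht01 : ∀ z : ι, t (Sum.inl z) = 0 ∨ t (Sum.inl z) = 1 := by
    intro z
    obtain ⟨n, hn⟩ := intSubring_exists (hdiag_int z)
    have h1 := hdiag_le z
    have h0 := hnonneg (Sum.inl z)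
    have hteq : t (Sum.inl z) = (n : ℝ) := hn.symm
    have hle1 : (n : ℝ) ≤ 1 := by rw [hn]; exact h1
    have hn01 : n = 0 ∨ n = 1 := by
      have hge : (0:ℤ) ≤ n := by rw [hteq] at h0; exact_mod_cast h0
      have hle : n ≤ 1 := by exact_mod_cast hle1
      omega
    rcases hn01 with h | h <;> [left; right] <;> rw [hteq, h] <;> norm_num
  set T := F.filter (fun p => t p ≠ 0) with hT
  have hT1 : ∀ p ∈ T, t p = 1 := by
    intro p hp
    rw [hT, Finset.mem_filter] at hp
    cases p with
    | inr j => exact absurd (htinr j) hp.2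
    | inl z =>
      rcases ht01 z with h | h
      · exact absurd h hp.2
      · exact h
  have hsumT : ∑ p ∈ T, t p = 2 := by
    rw [hT, Finset.sum_filter_ne_zero]
    exact hsum
  have hcard : T.card = 2 := by
    have hc : ∑ p ∈ T, t p = (T.card : ℝ) := by
      rw [Finset.sum_congr rfl hT1]
      simp
    rw [hsumT] at hc
    exact_mod_cast hc.symm
  obtain ⟨a, b', hab, hTe⟩ := Finset.card_eq_two.mp hcard
  have haT : a ∈ T := by rw [hTe]; simp
  have hbT : b' ∈ T := by rw [hTe]; simp
  obtain ⟨i, rfl⟩ : ∃ i, a = Sum.inl i := by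
    cases a with
    | inl i => exact ⟨i, rfl⟩
    | inr j => exact absurd (htinr j) (Finset.mem_filter.mp haT).2
  obtain ⟨j, rfl⟩ : ∃ i, b' = Sum.inl i := by
    cases b' with
    | inl i => exact ⟨i, rfl⟩
    | inr j => exact absurd (htinr j) (Finset.mem_filter.mp hbT).2
  have hij : i ≠ j := fun h => hab (by rw [h])
  have hti : t (Sum.inl i) = 1 := hT1 _ haT
  have htj : t (Sum.inl j) = 1 := hT1 _ hbT
  obtain ⟨m, hm⟩ := intSubring_exists (hoff_int i j hij)
  obtain ⟨n, hn⟩ := intSubring_exists (hoff_int j i hij.symm)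
  have hprod : (C (Sum.inl i) * Q (Sum.inl j)) * (C (Sum.inl j) * Q (Sum.inl i)) = 1 := by
    have he : (C (Sum.inl i) * Q (Sum.inl j)) * (C (Sum.inl j) * Q (Sum.inl i))
        = t (Sum.inl i) * t (Sum.inl j) := by simp only [ht]; ring
    rw [he, hti, htj]; norm_num
  have hmn : m * n = 1 := by
    have hcast : ((m * n : ℤ) : ℝ) = 1 := by push_cast; rw [hm, hn, hprod]
    exact_mod_cast hcast
  have hm1 : m = -1 ∧ n = -1 := by
    rcases Int.mul_eq_one_iff_eq_one_or_neg_one.mp hmn with ⟨h1, h2⟩ | h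
    · exfalso
      have hle := hoff_le i j hij
      rw [← hm, h1] at hle; norm_num at hle
    · exact h
  refine ⟨i, j, hij, ?_, ?_, ?_, ?_⟩
  · simpa only [ht] using hti
  · simpa only [ht] using htj
  · rw [← hm, hm1.1]; norm_num
  · rw [← hn, hm1.2]; norm_num

set_option maxHeartbeats 1000000 in
set_option synthInstance.maxHeartbeats 200000 in
/-- If a realization of a Coxeter system `(W, S)` over a commutative domain `𝕜 ⊆ ℝ`
preserves the almost-orthant for `k = ℤ` spanned by `(X, H)`, then each simple reflection
`s ∈ S` either acts trivially on `V`, or there exist `x ≠ y` in `X` and `ħ` in the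
`ℤ`-span of `H` with `s(x) = y + ħ`, `s(y) = x - ħ`, and `s(z) = z` for all
`z ∈ X \ {x, y}`; that is, `s` permutes `X` by a single transposition modulo the span
of `H`. -/
theorem simple_reflection_is_transposition_mod_H
    {𝕜 : Subring ℝ} {B W : Type*} [Group W] {M : CoxeterMatrix B}
    {cs : CoxeterSystem M W} {V : Type*} [AddCommGroup V] [Module 𝕜 V] [Module.Free 𝕜 V]
    {r : Realization 𝕜 M cs V} {ι η : Type*}
    (d : OrthantSetup 𝕜 intSubring r ι η) (b : B) :
    (∀ v : V, r.ρ (cs.simple b) v = v) ∨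
    ∃ (i j : ι) (h : V),
      i ≠ j ∧ d.InHSpan h ∧
      r.ρ (cs.simple b) (d.X i) = d.X j + h ∧
      r.ρ (cs.simple b) (d.X j) = d.X i - h ∧
      (∀ z : ι, z ≠ i → z ≠ j → r.ρ (cs.simple b) (d.X z) = d.X z) := by
  classical
  right
  have hact : ∀ v : V, r.ρ (cs.simple b) v = v - r.coroot b v • r.root b := r.simple_act b
  have hcast : ∀ x y : 𝕜, (x : ℝ) = (y : ℝ) → x = y := fun x y h => Subtype.ext h
  have hcc : r.coroot b (r.root b) = 2 := r.coroot_root_self b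
  have h2 : (2 : 𝕜) ≠ 0 := by
    intro h
    have h' : ((2:𝕜):ℝ) = ((0:𝕜):ℝ) := by rw [h]
    push_cast at h'
    norm_num at h'
  have hroot_ne : r.root b ≠ 0 := by
    intro h; rw [h, map_zero] at hcc; exact h2 hcc.symm
  have hrepr_ne : ∃ p0, d.e.repr (r.root b) p0 ≠ 0 := by
    by_contra h
    push_neg at h
    apply hroot_ne
    apply d.e.repr.map_eq_zero_iff.mp
    ext p; simpa using h p
  have hsmul0 : ∀ a : 𝕜, a • r.root b = 0 → a = 0 := by
    intro a ha
    obtain ⟨p0, hp0⟩ := hrepr_ne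
    have h1 : a * d.e.repr (r.root b) p0 = 0 := by
      have h2' := congrArg (fun v => d.e.repr v p0) ha
      simpa using h2'
    rcases mul_eq_zero.mp h1 with h | h
    · exact h
    · exact absurd h hp0
  have hinrc : ∀ j : η, r.coroot b (d.e (Sum.inr j)) = 0 := by
    intro j
    have h1 := d.invariant j (cs.simple b)
    rw [hact] at h1
    exact hsmul0 _ (sub_eq_self.mp h1)
  have hXdef : ∀ z : ι, d.X z = d.e (Sum.inl z) := fun z => rfl
  have hXorth : ∀ z : ι, d.X z ∈ almostOrthant intSubring d.e := by
    intro z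
    refine ⟨fun p => ?_, fun w => ?_⟩
    · rw [hXdef, d.e.repr_self, Finsupp.single_apply]
      split
      · push_cast; exact one_mem _
      · push_cast; exact zero_mem _
    · rw [hXdef, d.e.repr_self, Finsupp.single_apply]
      split <;> push_cast <;> norm_num
  have hg_orth : ∀ z : ι, r.ρ (cs.simple b) (d.X z) ∈ almostOrthant intSubring d.e :=
    fun z => d.orthant_stable (cs.simple b) _ (hXorth z)
  have hreprX : ∀ (z : ι) (p), ((d.e.repr (r.ρ (cs.simple b) (d.X z)) p : 𝕜) : ℝ)
      = (if Sum.inl z = p then (1:ℝ) else 0)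
        - ((r.coroot b (d.e (Sum.inl z)) : 𝕜) : ℝ) * ((d.e.repr (r.root b) p : 𝕜) : ℝ) := by
    intro z p
    have h1 : d.e.repr (r.ρ (cs.simple b) (d.X z)) p
        = (if Sum.inl z = p then (1:𝕜) else 0)
          - r.coroot b (d.e (Sum.inl z)) * d.e.repr (r.root b) p := by
      rw [hact, hXdef]
      simp only [map_sub, map_smul, Finsupp.sub_apply, Finsupp.smul_apply, smul_eq_mul,
        Module.Basis.repr_self, Finsupp.single_apply]
    rw [h1]
    push_cast [apply_ite (fun x : 𝕜 => (x : ℝ))]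
    ring
  have hInt : ∀ (z : ι) (p), ((if Sum.inl z = p then (1:ℝ) else 0)
      - ((r.coroot b (d.e (Sum.inl z)) : 𝕜) : ℝ) * ((d.e.repr (r.root b) p : 𝕜) : ℝ))
      ∈ intSubring := by
    intro z p
    have h1 := (hg_orth z).1 p
    rwa [hreprX] at h1
  have hPos : ∀ (z w : ι), 0 ≤ (if Sum.inl z = (Sum.inl w : ι ⊕ η) then (1:ℝ) else 0)
      - ((r.coroot b (d.e (Sum.inl z)) : 𝕜) : ℝ)
        * ((d.e.repr (r.root b) (Sum.inl w) : 𝕜) : ℝ) := by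
    intro z w
    have h1 := (hg_orth z).2 w
    rwa [hreprX] at h1
  have hdiag_le : ∀ z : ι, ((r.coroot b (d.e (Sum.inl z)) : 𝕜) : ℝ)
      * ((d.e.repr (r.root b) (Sum.inl z) : 𝕜) : ℝ) ≤ 1 := by
    intro z
    have := hPos z z
    rw [if_pos rfl] at this
    linarith
  have hdiag_int : ∀ z : ι, ((r.coroot b (d.e (Sum.inl z)) : 𝕜) : ℝ)
      * ((d.e.repr (r.root b) (Sum.inl z) : 𝕜) : ℝ) ∈ intSubring := by
    intro z
    have h1 := hInt z (Sum.inl z)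
    rw [if_pos rfl] at h1
    have h2' := intSubring.sub_mem (one_mem _) h1
    simpa using h2'
  have hoff_le : ∀ z w : ι, z ≠ w → ((r.coroot b (d.e (Sum.inl z)) : 𝕜) : ℝ)
      * ((d.e.repr (r.root b) (Sum.inl w) : 𝕜) : ℝ) ≤ 0 := by
    intro z w hzw
    have h1 := hPos z w
    rw [if_neg (by simpa using hzw)] at h1
    linarith
  have hoff_int : ∀ z w : ι, z ≠ w → ((r.coroot b (d.e (Sum.inl z)) : 𝕜) : ℝ)
      * ((d.e.repr (r.root b) (Sum.inl w) : 𝕜) : ℝ) ∈ intSubring := by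
    intro z w hzw
    have h1 := hInt z (Sum.inl w)
    rw [if_neg (by simpa using hzw)] at h1
    have h2' := intSubring.neg_mem h1
    simpa using h2'
  have hsum𝕜 : ((d.e.repr (r.root b)).sum fun p a => a * r.coroot b (d.e p)) = 2 := by
    have h1 : r.coroot b ((Finsupp.linearCombination 𝕜 d.e) (d.e.repr (r.root b))) = 2 := by
      rw [d.e.linearCombination_repr]; exact hcc
    rw [Finsupp.linearCombination_apply, map_finsuppSum] at h1
    simpa only [map_smul, smul_eq_mul] using h1
  have hsumR : (∑ p ∈ (d.e.repr (r.root b)).support,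
      ((r.coroot b (d.e p) : 𝕜) : ℝ) * ((d.e.repr (r.root b) p : 𝕜) : ℝ)) = 2 := by
    have h1 : ((((d.e.repr (r.root b)).sum fun p a => a * r.coroot b (d.e p)) : 𝕜) : ℝ)
        = ((2:𝕜):ℝ) := by rw [hsum𝕜]
    rw [Finsupp.sum] at h1
    push_cast at h1
    have h2c : ((2:𝕜):ℝ) = 2 := by norm_cast
    rw [h2c] at h1
    rw [← h1]
    exact Finset.sum_congr rfl fun p _ => mul_comm _ _
  obtain ⟨i, j, hij, k1, k2, k3, k4⟩ :=
    exists_transposition_indices (d.e.repr (r.root b)).support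
      (fun p => ((r.coroot b (d.e p) : 𝕜) : ℝ))
      (fun p => ((d.e.repr (r.root b) p : 𝕜) : ℝ))
      (fun j' => by simp [hinrc j'])
      hdiag_le hdiag_int hoff_le hoff_int hsumR
  have K1 : r.coroot b (d.e (Sum.inl i)) * d.e.repr (r.root b) (Sum.inl i) = 1 := by
    apply hcast; push_cast; exact k1
  have K2 : r.coroot b (d.e (Sum.inl j)) * d.e.repr (r.root b) (Sum.inl j) = 1 := by
    apply hcast; push_cast; exact k2
  have K3 : r.coroot b (d.e (Sum.inl i)) * d.e.repr (r.root b) (Sum.inl j) = -1 := by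
    apply hcast; push_cast; exact k3
  have K4 : r.coroot b (d.e (Sum.inl j)) * d.e.repr (r.root b) (Sum.inl i) = -1 := by
    apply hcast; push_cast; exact k4
  have hone_ne : (1 : 𝕜) ≠ 0 := by
    intro h
    have h' : ((1:𝕜):ℝ) = ((0:𝕜):ℝ) := by rw [h]
    push_cast at h'
    norm_num at h'
  have hci_ne : r.coroot b (d.e (Sum.inl i)) ≠ 0 := by
    intro h; rw [h, zero_mul] at K1; exact hone_ne K1.symm
  have hpi_ne : d.e.repr (r.root b) (Sum.inl i) ≠ 0 := by
    intro h; rw [h, mul_zero] at K1; exact hone_ne K1.symm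
  have hpj : d.e.repr (r.root b) (Sum.inl j) = - d.e.repr (r.root b) (Sum.inl i) := by
    have h1 : r.coroot b (d.e (Sum.inl i))
        * (d.e.repr (r.root b) (Sum.inl i) + d.e.repr (r.root b) (Sum.inl j)) = 0 := by
      rw [mul_add, K1, K3]; ring
    rcases mul_eq_zero.mp h1 with h | h
    · exact absurd h hci_ne
    · linear_combination h
  have hcj : r.coroot b (d.e (Sum.inl j)) = - r.coroot b (d.e (Sum.inl i)) := by
    have h1 : (r.coroot b (d.e (Sum.inl i)) + r.coroot b (d.e (Sum.inl j)))
        * d.e.repr (r.root b) (Sum.inl i) = 0 := by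
      rw [add_mul, K1, K4]; ring
    rcases mul_eq_zero.mp h1 with h | h
    · linear_combination h
    · exact absurd h hpi_ne
  have hQji : ((d.e.repr (r.root b) (Sum.inl j) : 𝕜) : ℝ)
      = -((d.e.repr (r.root b) (Sum.inl i) : 𝕜) : ℝ) := by
    rw [hpj]; push_cast; ring
  have hCji : ((r.coroot b (d.e (Sum.inl j)) : 𝕜) : ℝ)
      = -((r.coroot b (d.e (Sum.inl i)) : 𝕜) : ℝ) := by
    rw [hcj]; push_cast; ring
  have hcz : ∀ z : ι, z ≠ i → z ≠ j → r.coroot b (d.e (Sum.inl z)) = 0 := by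
    intro z hzi hzj
    have h1 := hoff_le z i hzi
    have h2' := hoff_le z j hzj
    rw [hQji] at h2'
    have hreal : ((r.coroot b (d.e (Sum.inl z)) : 𝕜) : ℝ)
        * ((d.e.repr (r.root b) (Sum.inl i) : 𝕜) : ℝ) = 0 := by nlinarith
    have hK : r.coroot b (d.e (Sum.inl z)) * d.e.repr (r.root b) (Sum.inl i) = 0 := by
      apply hcast; push_cast; exact hreal
    rcases mul_eq_zero.mp hK with h | h
    · exact h
    · exact absurd h hpi_ne
  have hpz : ∀ z : ι, z ≠ i → z ≠ j → d.e.repr (r.root b) (Sum.inl z) = 0 := by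
    intro z hzi hzj
    have h1 := hoff_le i z (fun h => hzi h.symm)
    have h2' := hoff_le j z (fun h => hzj h.symm)
    rw [hCji] at h2'
    have hreal : ((r.coroot b (d.e (Sum.inl i)) : 𝕜) : ℝ)
        * ((d.e.repr (r.root b) (Sum.inl z) : 𝕜) : ℝ) = 0 := by nlinarith
    have hK : r.coroot b (d.e (Sum.inl i)) * d.e.repr (r.root b) (Sum.inl z) = 0 := by
      apply hcast; push_cast; exact hreal
    rcases mul_eq_zero.mp hK with h | h
    · exact absurd h hci_ne
    · exact h
  refine ⟨i, j,
    d.e (Sum.inl i) - r.coroot b (d.e (Sum.inl i)) • r.root b - d.e (Sum.inl j),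
    hij, ?_, ?_, ?_, ?_⟩
  · refine ⟨fun z => ?_, fun j' => ?_⟩
    · simp only [map_sub, map_smul, Finsupp.sub_apply, Finsupp.smul_apply, smul_eq_mul,
        Module.Basis.repr_self, Finsupp.single_apply]
      rcases eq_or_ne z i with rfl | hzi
      · rw [if_pos rfl, if_neg (fun hh => hij (Sum.inl.inj hh).symm), K1]; ring
      · rcases eq_or_ne z j with rfl | hzj
        · rw [if_neg (fun hh => hzi (Sum.inl.inj hh).symm), if_pos rfl, hpj, mul_neg, K1]
          ring
        · rw [if_neg (fun hh => hzi (Sum.inl.inj hh).symm),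
            if_neg (fun hh => hzj (Sum.inl.inj hh).symm), hpz z hzi hzj, mul_zero]
          ring
    · have h1 := hInt i (Sum.inr j')
      rw [if_neg (by simp)] at h1
      have he : d.e.repr (d.e (Sum.inl i) - r.coroot b (d.e (Sum.inl i)) • r.root b
            - d.e (Sum.inl j)) (Sum.inr j')
          = - (r.coroot b (d.e (Sum.inl i)) * d.e.repr (r.root b) (Sum.inr j')) := by
        simp only [map_sub, map_smul, Finsupp.sub_apply, Finsupp.smul_apply, smul_eq_mul,
          Module.Basis.repr_self, Finsupp.single_apply]
        rw [if_neg (by simp), if_neg (by simp)]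
        ring
      rw [he]
      push_cast
      simpa using h1
  · rw [hact, hXdef, hXdef]
    abel
  · rw [hact, hXdef, hXdef]
    have hco : r.coroot b (d.e (Sum.inl j)) = - r.coroot b (d.e (Sum.inl i)) := hcj
    rw [hco, neg_smul]
    abel
  · intro z hzi hzj
    rw [hact, hXdef, hcz z hzi hzj, zero_smul, sub_zero]
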